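/- Let F : [0,∞) → [0,∞) be increasing and concave with F(0) = 0 and F(1) = 1, and let G(u) = u - 1 - ln u. Then for all x, y > 0 with F(y) > 0, the quantity B(x,y) = G(1/x) + G(x·F(y)/y) - G(F(y)) + G(y) is nonnegative. Moreover B(x,y) = 0 if and only if x = 1 and F(y) = y. -/

import Mathlib

set_option maxHeartbeats 800000


noncomputable def G (u : ℝ) : ℝ := u - 1 - Real.log u


private lemma aux_uv_eq (u v : ℝ) (hup : 0 < u) (hvp : 0 < v)
    (h : 2 - v^2 - u*v = 0)
    (hcase : (v ≤ u ∧ u ≤ 1 ∧ v ≤ 1) ∨ (u ≤ v ∧ 1 ≤ u ∧ 1 ≤ v)) : u = v := by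
  rcases hcase with ⟨h1, h2, h3⟩ | ⟨h1, h2, h3⟩
  · have huv : u * v ≤ 1 := by nlinarith
    have hv2 : v^2 ≤ 1 := by nlinarith
    have e1 : u * v = 1 := by nlinarith
    have e2 : v^2 = 1 := by nlinarith
    have hv1 : v = 1 := by nlinarith
    have hu1 : u = 1 := by
      rw [hv1, mul_one] at e1; exact e1
    rw [hu1, hv1]
  · have huv : 1 ≤ u * v := by nlinarith
    have hv2 : 1 ≤ v^2 := by nlinarith
    have e1 : u * v = 1 := by nlinarith
    have e2 : v^2 = 1 := by nlinarith
    have hv1 : v = 1 := by nlinarith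
    have hu1 : u = 1 := by
      rw [hv1, mul_one] at e1; exact e1
    rw [hu1, hv1]

theorem entropy_bracket (F : ℝ → ℝ)
    (hmono : MonotoneOn F (Set.Ici (0:ℝ)))
    (hconc : ConcaveOn ℝ (Set.Ici (0:ℝ)) F)
    (hnn : ∀ t ≥ (0:ℝ), 0 ≤ F t)
    (hF0 : F 0 = 0) (hF1 : F 1 = 1)
    (x y : ℝ) (hx : 0 < x) (hy : 0 < y) (hFy : 0 < F y) :
    0 ≤ G (1/x) + G (x * F y / y) - G (F y) + G y ∧
    (G (1/x) + G (x * F y / y) - G (F y) + G y = 0 ↔ x = 1 ∧ F y = y) := by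
  set c := F y with hc
  -- Step 1: simplify the bracket
  have l1 : Real.log (1/x) = - Real.log x := by rw [one_div, Real.log_inv]
  have l2 : Real.log (x*c/y) = Real.log x + Real.log c - Real.log y := by
    rw [Real.log_div (by positivity) hy.ne', Real.log_mul hx.ne' hFy.ne']
  have Beq : G (1/x) + G (x * c / y) - G c + G y = 1/x + x*c/y + y - c - 2 := by
    simp only [G, l1, l2]; ring
  -- Step 2: F y is between min(1,y) and max(1,y)
  have hkey1 : y ≤ 1 → y ≤ c ∧ c ≤ 1 := by
    intro h1
    constructor
    · have := hconc.2 (Set.mem_Ici.2 (le_refl 0)) (Set.mem_Ici.2 zero_le_one)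
        (show (0:ℝ) ≤ 1 - y by linarith) hy.le (by ring)
      have h2 : (1 - y) * F 0 + y * F 1 ≤ F ((1-y) * 0 + y * 1) := by
        simpa [smul_eq_mul] using this
      have harg : (1-y) * 0 + y * 1 = y := by ring
      rw [hF0, hF1, harg] at h2
      linarith
    · have := hmono (Set.mem_Ici.2 hy.le) (Set.mem_Ici.2 zero_le_one) h1
      simpa [hF1] using this
  have hkey2 : 1 ≤ y → 1 ≤ c ∧ c ≤ y := by
    intro h1
    constructor
    · have := hmono (Set.mem_Ici.2 zero_le_one) (Set.mem_Ici.2 (by linarith : (0:ℝ) ≤ y)) h1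
      simpa [hF1] using this
    · have hyne : y ≠ 0 := hy.ne'
      have := hconc.2 (Set.mem_Ici.2 (le_refl 0)) (Set.mem_Ici.2 hy.le)
        (show (0:ℝ) ≤ 1 - 1/y by
          have : 1/y ≤ 1 := by rw [div_le_one hy]; exact h1
          linarith) (show (0:ℝ) ≤ 1/y by positivity) (by ring)
      have h2 : (1 - 1/y) * F 0 + (1/y) * F y ≤ F ((1-1/y) * 0 + (1/y) * y) := by
        simpa [smul_eq_mul] using this
      have harg : (1-1/y) * 0 + (1/y) * y = 1 := by field_simp; ring
      rw [hF0, harg, hF1, mul_zero, zero_add] at h2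
      have : (1/y) * c ≤ 1 := h2
      calc c = y * ((1/y) * c) := by field_simp
        _ ≤ y * 1 := by exact mul_le_mul_of_nonneg_left this hy.le
        _ = y := mul_one y
  -- Step 3: sqrt variables
  set u := Real.sqrt c with hu
  set v := Real.sqrt y with hv
  set w := Real.sqrt x with hw
  have hu2 : u^2 = c := Real.sq_sqrt hFy.le
  have hv2 : v^2 = y := Real.sq_sqrt hy.le
  have hw2 : w^2 = x := Real.sq_sqrt hx.le
  have hup : 0 < u := Real.sqrt_pos.2 hFy
  have hvp : 0 < v := Real.sqrt_pos.2 hy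
  have hwp : 0 < w := Real.sqrt_pos.2 hx
  -- the product term is nonnegative
  have hprod : 0 ≤ (u - v) * (2 - v^2 - u*v) := by
    rcases le_total y 1 with h1 | h1
    · obtain ⟨ha, hb⟩ := hkey1 h1
      have huv : v ≤ u := by
        rw [hu, hv]; exact Real.sqrt_le_sqrt ha
      have hu1 : u ≤ 1 := by
        rw [hu]; calc Real.sqrt c ≤ Real.sqrt 1 := Real.sqrt_le_sqrt hb
          _ = 1 := Real.sqrt_one
      have hv1 : v ≤ 1 := by
        rw [hv]; calc Real.sqrt y ≤ Real.sqrt 1 := Real.sqrt_le_sqrt h1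
          _ = 1 := Real.sqrt_one
      have : u*v ≤ 1 := by nlinarith
      nlinarith
    · obtain ⟨ha, hb⟩ := hkey2 h1
      have huv : u ≤ v := by
        rw [hu, hv]; exact Real.sqrt_le_sqrt hb
      have hu1 : 1 ≤ u := by
        rw [hu]; calc (1:ℝ) = Real.sqrt 1 := Real.sqrt_one.symm
          _ ≤ Real.sqrt c := Real.sqrt_le_sqrt ha
      have hv1 : 1 ≤ v := by
        rw [hv]; calc (1:ℝ) = Real.sqrt 1 := Real.sqrt_one.symm
          _ ≤ Real.sqrt y := Real.sqrt_le_sqrt h1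
      have : 1 ≤ u*v := by nlinarith
      nlinarith
  -- key identity: x*y*B = (v - w^2*u)^2 + w^2*v*(u-v)*(2-v^2-u*v)
  have hident : x*y*(1/x + x*c/y + y - c - 2)
      = (v - w^2*u)^2 + w^2*v*((u - v) * (2 - v^2 - u*v)) := by
    have h1 : x*y*(1/x + x*c/y + y - c - 2) = y + x^2*c + x*y^2 - x*y*c - 2*(x*y) := by
      field_simp
    rw [h1, ← hu2, ← hv2, ← hw2]
    ring
  have hnum : 0 ≤ x*y*(1/x + x*c/y + y - c - 2) := by
    rw [hident]
    have := sq_nonneg (v - w^2*u)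
    have h2 : 0 ≤ w^2*v*((u - v) * (2 - v^2 - u*v)) := by positivity
    linarith
  have hxy : 0 < x*y := mul_pos hx hy
  have hB : 0 ≤ 1/x + x*c/y + y - c - 2 := by nlinarith [hnum, mul_pos hx hy]
  refine ⟨by rw [Beq]; exact hB, ?_, ?_⟩
  · -- forward: B = 0 → x = 1 ∧ c = y
    intro h0
    rw [Beq] at h0
    have hzero : (v - w^2*u)^2 + w^2*v*((u - v) * (2 - v^2 - u*v)) = 0 := by
      rw [← hident, h0, mul_zero]
    have hsq : 0 ≤ (v - w^2*u)^2 := sq_nonneg _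
    have hpr : 0 ≤ w^2*v*((u - v) * (2 - v^2 - u*v)) := by positivity
    have e1 : (v - w^2*u)^2 = 0 := by linarith
    have e2 : w^2*v*((u - v) * (2 - v^2 - u*v)) = 0 := by linarith
    have e1' : v = w^2*u := by
      have := pow_eq_zero_iff (n := 2) (by norm_num) |>.mp e1
      linarith
    have e2' : (u - v) * (2 - v^2 - u*v) = 0 := by
      have : w^2*v ≠ 0 := by positivity
      exact (mul_eq_zero.1 e2).resolve_left this
    have huv : u = v := by
      rcases mul_eq_zero.1 e2' with h | h
      · linarith
      · refine aux_uv_eq u v hup hvp (by linarith) ?_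
        rcases le_total y 1 with h1 | h1
        · obtain ⟨ha, hb⟩ := hkey1 h1
          refine Or.inl ⟨by rw [hu, hv]; exact Real.sqrt_le_sqrt ha, ?_, ?_⟩
          · rw [hu]
            calc Real.sqrt c ≤ Real.sqrt 1 := Real.sqrt_le_sqrt hb
              _ = 1 := Real.sqrt_one
          · rw [hv]
            calc Real.sqrt y ≤ Real.sqrt 1 := Real.sqrt_le_sqrt h1
              _ = 1 := Real.sqrt_one
        · obtain ⟨ha, hb⟩ := hkey2 h1
          refine Or.inr ⟨by rw [hu, hv]; exact Real.sqrt_le_sqrt hb, ?_, ?_⟩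
          · rw [hu]
            calc (1:ℝ) = Real.sqrt 1 := Real.sqrt_one.symm
              _ ≤ Real.sqrt c := Real.sqrt_le_sqrt ha
          · rw [hv]
            calc (1:ℝ) = Real.sqrt 1 := Real.sqrt_one.symm
              _ ≤ Real.sqrt y := Real.sqrt_le_sqrt h1
    have hcy : c = y := by rw [← hu2, ← hv2, huv]
    have hx1 : x = 1 := by
      have hvv : v = w ^ 2 * v := by rw [huv] at e1'; exact e1'
      have hw1 : w ^ 2 = 1 := mul_right_cancel₀ hvp.ne' (by linarith : w ^ 2 * v = 1 * v)
      rw [← hw2, hw1]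
    exact ⟨hx1, hcy⟩
  · -- backward
    rintro ⟨hx1, hcy⟩
    rw [Beq, hx1, hcy]
    rw [one_div_one, one_mul, div_self hy.ne']
    ring
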